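/- Suppose p is non-increasing and there are constants ℓ_p > 0 and R > 0 with p(a) − p(b) ≥ ℓ_p·(b − a) for all 0 ≤ a ≤ b ≤ R. Let x, y, z₀ ∈ ℝ^N, ρ > 0, c > 0, and m ≥ 0 be such that μ(B(z₀,ρ)) ≥ m, where B(z₀,ρ) is the open Euclidean ball, and such that for μ-almost every z ∈ B(z₀,ρ) one has |‖x−z‖ − ‖y−z‖| ≥ c and min(‖x−z‖, ‖y−z‖) + c ≤ R. Then ∫_{ℝ^N} (p(‖x−z‖) − p(‖y−z‖))² dμ(z) ≥ m·ℓ_p²·c², and consequently K(x,y) ≤ (K(x,x) + K(y,y))/2 − m·ℓ_p²·c²/2. -/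

import Mathlib

open MeasureTheory

/-- The common-neighbor kernel `K(x,y) = ∫ p(‖x−z‖)·p(‖y−z‖) dμ(z)`. -/
noncomputable def commonK {N : ℕ} (μ : Measure (EuclideanSpace ℝ (Fin N)))
    (p : ℝ → ℝ) (x y : EuclideanSpace ℝ (Fin N)) : ℝ :=
  ∫ z, p ‖x - z‖ * p ‖y - z‖ ∂μ

/-- if `p` is non-increasing, decreases at rate at least `ℓ_p` on `[0,R]`,
and `μ(B(z₀,ρ)) ≥ m` where for `μ`-a.e. `z ∈ B(z₀,ρ)` the distances `‖x−z‖, ‖y−z‖` differ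
by at least `c` and `min(‖x−z‖,‖y−z‖) + c ≤ R`, then
`∫ (p(‖x−z‖) − p(‖y−z‖))² dμ ≥ m·ℓ_p²·c²` and consequently
`K(x,y) ≤ (K(x,x)+K(y,y))/2 − m·ℓ_p²·c²/2`. -/
theorem commonK_le_of_separated_ball {N : ℕ} (hN : 0 < N)
    (μ : Measure (EuclideanSpace ℝ (Fin N))) [IsProbabilityMeasure μ]
    (p : ℝ → ℝ) (hpmeas : Measurable p)
    (hp0 : ∀ t : ℝ, 0 ≤ t → 0 ≤ p t) (hp1 : ∀ t : ℝ, 0 ≤ t → p t ≤ 1)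
    (hmono : ∀ a b : ℝ, 0 ≤ a → a ≤ b → p b ≤ p a)
    (ℓp R : ℝ) (hℓp : 0 < ℓp) (hR : 0 < R)
    (hlow : ∀ a b : ℝ, 0 ≤ a → a ≤ b → b ≤ R → ℓp * (b - a) ≤ p a - p b)
    (x y z₀ : EuclideanSpace ℝ (Fin N)) (ρ c m : ℝ)
    (hρ : 0 < ρ) (hc : 0 < c) (hm : 0 ≤ m)
    (hball : ENNReal.ofReal m ≤ μ (Metric.ball z₀ ρ))
    (hsep : ∀ᵐ z ∂μ, z ∈ Metric.ball z₀ ρ →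
      c ≤ |‖x - z‖ - ‖y - z‖| ∧ min ‖x - z‖ ‖y - z‖ + c ≤ R) :
    m * ℓp ^ 2 * c ^ 2 ≤ ∫ z, (p ‖x - z‖ - p ‖y - z‖) ^ 2 ∂μ ∧
      commonK μ p x y ≤
        (commonK μ p x x + commonK μ p y y) / 2 - m * ℓp ^ 2 * c ^ 2 / 2 := by
  have hmeasF : Measurable fun z : EuclideanSpace ℝ (Fin N) => p ‖x - z‖ :=
    hpmeas.comp ((measurable_const.sub measurable_id).norm)
  have hmeasG : Measurable fun z : EuclideanSpace ℝ (Fin N) => p ‖y - z‖ :=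
    hpmeas.comp ((measurable_const.sub measurable_id).norm)
  have hF0 : ∀ z : EuclideanSpace ℝ (Fin N), 0 ≤ p ‖x - z‖ := fun z => hp0 _ (norm_nonneg _)
  have hF1 : ∀ z : EuclideanSpace ℝ (Fin N), p ‖x - z‖ ≤ 1 := fun z => hp1 _ (norm_nonneg _)
  have hG0 : ∀ z : EuclideanSpace ℝ (Fin N), 0 ≤ p ‖y - z‖ := fun z => hp0 _ (norm_nonneg _)
  have hG1 : ∀ z : EuclideanSpace ℝ (Fin N), p ‖y - z‖ ≤ 1 := fun z => hp1 _ (norm_nonneg _)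
  -- integrability helpers
  have hbnd : ∀ f : EuclideanSpace ℝ (Fin N) → ℝ, Measurable f →
      (∀ z, |f z| ≤ 1) → Integrable f μ := by
    intro f hf hb
    refine (integrable_const (1 : ℝ)).mono' hf.aestronglyMeasurable ?_
    filter_upwards with z
    simpa [Real.norm_eq_abs] using hb z
  have hintFF : Integrable (fun z => p ‖x - z‖ * p ‖x - z‖) μ := by
    refine hbnd _ (hmeasF.mul hmeasF) fun z => ?_
    rw [abs_of_nonneg (mul_nonneg (hF0 z) (hF0 z))]
    nlinarith [hF0 z, hF1 z]
  have hintGG : Integrable (fun z => p ‖y - z‖ * p ‖y - z‖) μ := by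
    refine hbnd _ (hmeasG.mul hmeasG) fun z => ?_
    rw [abs_of_nonneg (mul_nonneg (hG0 z) (hG0 z))]
    nlinarith [hG0 z, hG1 z]
  have hintFG : Integrable (fun z => p ‖x - z‖ * p ‖y - z‖) μ := by
    refine hbnd _ (hmeasF.mul hmeasG) fun z => ?_
    rw [abs_of_nonneg (mul_nonneg (hF0 z) (hG0 z))]
    nlinarith [hF0 z, hF1 z, hG0 z, hG1 z]
  have hintsq : Integrable (fun z => (p ‖x - z‖ - p ‖y - z‖) ^ 2) μ := by
    refine hbnd _ ((hmeasF.sub hmeasG).pow_const 2) fun z => ?_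
    rw [abs_of_nonneg (sq_nonneg _)]
    nlinarith [hF0 z, hF1 z, hG0 z, hG1 z]
  -- pointwise bound on the ball
  have hptwise : ∀ z : EuclideanSpace ℝ (Fin N),
      (c ≤ |‖x - z‖ - ‖y - z‖| ∧ min ‖x - z‖ ‖y - z‖ + c ≤ R) →
      (ℓp * c) ^ 2 ≤ (p ‖x - z‖ - p ‖y - z‖) ^ 2 := by
    intro z ⟨h1, h2⟩
    set a := ‖x - z‖ with ha'
    set b := ‖y - z‖ with hb'
    have ha : 0 ≤ a := norm_nonneg _
    have hb : 0 ≤ b := norm_nonneg _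
    have key : ∀ u v : ℝ, 0 ≤ u → u + c ≤ v → u + c ≤ R → ℓp * c ≤ p u - p v := by
      intro u v hu huv huR
      have h3 := hlow u (u + c) hu (by linarith) huR
      have h4 := hmono (u + c) v (by linarith) huv
      have : ℓp * (u + c - u) = ℓp * c := by ring
      linarith [this ▸ h3]
    rcases le_total a b with hab | hab
    · have h1' : c ≤ b - a := by rwa [abs_of_nonpos (by linarith : a - b ≤ 0), neg_sub] at h1
      have h2' : a + c ≤ R := by rwa [min_eq_left hab] at h2
      have hk := key a b ha (by linarith) h2'
      nlinarith [mul_pos hℓp hc]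
    · have h1' : c ≤ a - b := by rwa [abs_of_nonneg (by linarith : 0 ≤ a - b)] at h1
      have h2' : b + c ≤ R := by rwa [min_eq_right hab] at h2
      have hk := key b a hb (by linarith) h2'
      nlinarith [mul_pos hℓp hc]
    -- measure lower bound
  have hball' : m ≤ (μ (Metric.ball z₀ ρ)).toReal := by
    have h := ENNReal.toReal_mono (measure_ne_top μ _) hball
    rwa [ENNReal.toReal_ofReal hm] at h
  have hAE : ∀ᵐ z ∂(μ.restrict (Metric.ball z₀ ρ)),
      (ℓp * c) ^ 2 ≤ (p ‖x - z‖ - p ‖y - z‖) ^ 2 := by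
    rw [ae_restrict_iff' measurableSet_ball]
    filter_upwards [hsep] with z hz hzball
    exact hptwise z (hz hzball)
  have hset : (μ (Metric.ball z₀ ρ)).toReal * (ℓp * c) ^ 2 ≤
      ∫ z in Metric.ball z₀ ρ, (p ‖x - z‖ - p ‖y - z‖) ^ 2 ∂μ := by
    have := integral_mono_ae (integrable_const ((ℓp * c) ^ 2)) hintsq.restrict hAE
    simpa [integral_const, Measure.restrict_apply_univ, smul_eq_mul, Measure.real] using this
  have hfull : ∫ z in Metric.ball z₀ ρ, (p ‖x - z‖ - p ‖y - z‖) ^ 2 ∂μ ≤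
      ∫ z, (p ‖x - z‖ - p ‖y - z‖) ^ 2 ∂μ :=
    setIntegral_le_integral hintsq (ae_of_all _ fun z => sq_nonneg _)
  have part1 : m * ℓp ^ 2 * c ^ 2 ≤ ∫ z, (p ‖x - z‖ - p ‖y - z‖) ^ 2 ∂μ := by
    have h0 : m * ℓp ^ 2 * c ^ 2 ≤ (μ (Metric.ball z₀ ρ)).toReal * (ℓp * c) ^ 2 := by
      nlinarith [mul_le_mul_of_nonneg_right hball' (sq_nonneg (ℓp * c))]
    linarith
  refine ⟨part1, ?_⟩
  have hexp : ∫ z, (p ‖x - z‖ - p ‖y - z‖) ^ 2 ∂μ =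
      commonK μ p x x + commonK μ p y y - 2 * commonK μ p x y := by
    unfold commonK
    calc ∫ z, (p ‖x - z‖ - p ‖y - z‖) ^ 2 ∂μ
        = ∫ z, (p ‖x - z‖ * p ‖x - z‖ + p ‖y - z‖ * p ‖y - z‖
            - 2 * (p ‖x - z‖ * p ‖y - z‖)) ∂μ := by
          apply integral_congr_ae; filter_upwards with z; ring
      _ = commonK μ p x x + commonK μ p y y - 2 * commonK μ p x y := by
          have h12 : Integrable
              (fun z => p ‖x - z‖ * p ‖x - z‖ + p ‖y - z‖ * p ‖y - z‖) μ :=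
            hintFF.add hintGG
          have h3 : Integrable (fun z => 2 * (p ‖x - z‖ * p ‖y - z‖)) μ :=
            hintFG.const_mul 2
          rw [integral_sub h12 h3, integral_add hintFF hintGG, integral_const_mul]
          rfl
  linarith
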